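/- Let η_1,…,η_n ∈ {+1, −1} and η = diag(η_1,…,η_n) ∈ M_n(ℂ). Let C_1,…,C_n ∈ M_N(ℂ) and D_1,…,D_n ∈ M_N(ℂ) each be linearly independent families of matrices, and suppose they give rise to the same map with the same signs: for every ρ ∈ M_N(ℂ), Σ_{i=1}^n η_i · C_i ρ C_i† = Σ_{j=1}^n η_j · D_j ρ D_j†. Then there exists a matrix u ∈ M_n(ℂ) that is pseudounitary with respect to η (u† η u = η) such that D_j = Σ_i u_{ij} C_i for all j. -/

import Mathlib

open Matrix
open scoped ComplexConjugate

lemma exists_dual_family {K V : Type*} [Field K] [AddCommGroup V] [Module K V] {n : ℕ}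
    {v : Fin n → V} (hv : LinearIndependent K v) :
    ∃ f : Fin n → (V →ₗ[K] K), ∀ k i, f k (v i) = if i = k then 1 else 0 := by
  classical
  set p := Submodule.span K (Set.range v) with hp
  let b : Module.Basis (Fin n) K p := Module.Basis.span hv
  have hext : ∀ k : Fin n, ∃ g : V →ₗ[K] K, g.comp p.subtype = b.coord k :=
    fun k => (b.coord k).exists_extend
  choose f hf using hext
  refine ⟨f, fun k i => ?_⟩
  have hmem : v i ∈ p := Submodule.subset_span ⟨i, rfl⟩
  have h1 : f k (v i) = b.coord k ⟨v i, hmem⟩ := by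
    have := congrArg (fun g => g ⟨v i, hmem⟩) (hf k)
    simpa using this
  have hb : b i = ⟨v i, hmem⟩ := by
    ext; exact congrArg Subtype.val (Module.Basis.span_apply hv i)
  rw [h1, ← hb, Module.Basis.coord_apply, Module.Basis.repr_self]
  simp [Finsupp.single_apply]

lemma kraus_entry {N : ℕ} (A B : Matrix (Fin N) (Fin N) ℂ) (a b p q : Fin N) :
    (A * (single b q (1:ℂ)) * Bᴴ) a p = A a b * conj (B p q) := by
  simp [Matrix.mul_apply, Matrix.single, conjTranspose_apply, ite_and,
    Finset.sum_ite_eq, Finset.mul_sum, mul_comm]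

/-- **Pseudounitary freedom in the operator-sum representation (necessity).** If the
linearly independent families of operation elements `C` and `D` give rise to the same
Hermiticity-preserving map with the same signs,
`∑ i, η i • C i ρ (C i)ᴴ = ∑ j, η j • D j ρ (D j)ᴴ` for all `ρ`, then there is a
pseudounitary `u` (with respect to `η = diag(η₁,…,ηₙ)`) with `D j = ∑ i, u i j • C i`. -/
theorem stmt_14 {n N : ℕ} (η : Fin n → ℝ) (hη : ∀ i, η i = 1 ∨ η i = -1)
    (C D : Fin n → Matrix (Fin N) (Fin N) ℂ)
    (hC : LinearIndependent ℂ C) (hD : LinearIndependent ℂ D)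
    (heq : ∀ ρ : Matrix (Fin N) (Fin N) ℂ,
      ∑ i, (η i : ℂ) • (C i * ρ * (C i)ᴴ) = ∑ j, (η j : ℂ) • (D j * ρ * (D j)ᴴ)) :
    ∃ u : Matrix (Fin n) (Fin n) ℂ,
      uᴴ * Matrix.diagonal (fun i => (η i : ℂ)) * u =
        Matrix.diagonal (fun i => (η i : ℂ)) ∧
      ∀ j, D j = ∑ i, u i j • C i := by
  classical
  set c : Fin n → ℂ := fun i => (η i : ℂ) with hcdef
  have hcc : ∀ i, c i * c i = 1 := by
    intro i; rcases hη i with h | h <;> simp [hcdef, h]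
  have hconjc : ∀ i, conj (c i) = c i := fun i => Complex.conj_ofReal _
  obtain ⟨χ, hχ⟩ := exists_dual_family hC
  obtain ⟨ψ, hψ⟩ := exists_dual_family hD
  have S : ∀ a b p q : Fin N,
      ∑ i, c i * (C i a b * conj (C i p q)) = ∑ j, c j * (D j a b * conj (D j p q)) := by
    intro a b p q
    have h := congrFun (congrFun (heq (single b q (1:ℂ))) a) p
    simpa [Matrix.sum_apply, Matrix.smul_apply, smul_eq_mul, kraus_entry] using h
  have S' : ∀ a b p q : Fin N,
      ∑ i, c i * (conj (C i a b) * C i p q) = ∑ j, c j * (conj (D j a b) * D j p q) := by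
    intro a b p q
    have h := congrArg conj (S a b p q)
    simpa [map_sum, _root_.map_mul, hconjc, Complex.conj_conj] using h
  have MC : ∀ a b : Fin N,
      (∑ i, (c i * conj (C i a b)) • C i) = ∑ j, (c j * conj (D j a b)) • D j := by
    intro a b; ext p q
    simpa [Matrix.sum_apply, Matrix.smul_apply, smul_eq_mul, mul_assoc] using S' a b p q
  set u : Matrix (Fin n) (Fin n) ℂ := fun i k => c k * (c i * conj (ψ k (C i))) with hudef
  -- representation of D in terms of C
  have hDrep : ∀ k, ∀ a b : Fin N, D k a b = ∑ i, u i k * C i a b := by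
    intro k a b
    have h1 := congrArg (ψ k) (MC a b)
    rw [map_sum, map_sum] at h1
    simp only [LinearMap.map_smul, smul_eq_mul, hψ, mul_ite, mul_one, mul_zero,
      Finset.sum_ite_eq', Finset.mem_univ, if_true] at h1
    -- h1 : ∑ i, c i * conj (C i a b) * ψ k (C i) = c k * conj (D k a b)
    have h2 := congrArg conj h1
    simp only [map_sum, _root_.map_mul, hconjc, Complex.conj_conj] at h2
    -- h2 : ∑ i, c i * (C i a b * conj (ψ k (C i))) = c k * D k a b
    have h4 : D k a b = c k * ∑ i, c i * C i a b * conj (ψ k (C i)) := by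
      rw [h2, ← mul_assoc, hcc k, one_mul]
    rw [h4, Finset.mul_sum]
    refine Finset.sum_congr rfl fun i _ => ?_
    simp only [hudef]; ring
  have hD_eq : ∀ k, D k = ∑ i, u i k • C i := by
    intro k; ext a b
    simpa [Matrix.sum_apply, Matrix.smul_apply, smul_eq_mul] using hDrep k a b
  have hχD : ∀ p j, χ p (D j) = u p j := by
    intro p j
    rw [hD_eq j, map_sum]
    simp [hχ, Finset.sum_ite_eq']
  -- pseudounitarity relation
  have E1 : ∀ p m, ∑ j, c j * (u p j * conj (u m j)) = if p = m then c p else 0 := by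
    intro p m
    have hmat : (c p • C p : Matrix (Fin N) (Fin N) ℂ)
        = ∑ l, (conj (∑ j, c j * (u p j * conj (u l j)))) • C l := by
      ext q r
      have h4 := congrArg (χ p) (MC q r)
      rw [map_sum, map_sum] at h4
      simp only [LinearMap.map_smul, smul_eq_mul, hχ, hχD, mul_ite, mul_one, mul_zero,
        Finset.sum_ite_eq', Finset.mem_univ, if_true] at h4
      -- h4 : c p * conj (C p q r) = ∑ j, c j * conj (D j q r) * u p j
      have key : ∀ j, c j * conj (D j q r) * u p j
          = ∑ l, c j * (u p j * conj (u l j)) * conj (C l q r) := by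
        intro j
        have hconjD : conj (D j q r) = ∑ l, conj (u l j) * conj (C l q r) := by
          rw [hDrep j q r, map_sum]
          exact Finset.sum_congr rfl fun l _ => by rw [_root_.map_mul]
        rw [hconjD, Finset.mul_sum, Finset.sum_mul]
        exact Finset.sum_congr rfl fun l _ => by ring
      have h5 : c p * conj (C p q r)
          = ∑ l, (∑ j, c j * (u p j * conj (u l j))) * conj (C l q r) := by
        calc c p * conj (C p q r)
            = ∑ j, c j * conj (D j q r) * u p j := h4
          _ = ∑ j, ∑ l, c j * (u p j * conj (u l j)) * conj (C l q r) :=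
              Finset.sum_congr rfl fun j _ => key j
          _ = ∑ l, ∑ j, c j * (u p j * conj (u l j)) * conj (C l q r) := Finset.sum_comm
          _ = ∑ l, (∑ j, c j * (u p j * conj (u l j))) * conj (C l q r) :=
              Finset.sum_congr rfl fun l _ => (Finset.sum_mul _ _ _).symm
      have h6 := congrArg conj h5
      simp only [map_sum, _root_.map_mul, hconjc, Complex.conj_conj] at h6
      simpa [Matrix.sum_apply, Matrix.smul_apply, smul_eq_mul, map_sum, _root_.map_mul,
        hconjc, Complex.conj_conj] using h6
    have h7 := congrArg (χ m) hmat
    rw [LinearMap.map_smul, map_sum] at h7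
    simp only [LinearMap.map_smul, smul_eq_mul, hχ, mul_ite, mul_one, mul_zero,
      Finset.sum_ite_eq', Finset.mem_univ, if_true] at h7
    -- h7 : c p * (if p = m then 1 else 0) = conj (∑ j, c j * (u p j * conj (u m j)))
    have h8 := congrArg conj h7
    simp only [Complex.conj_conj] at h8
    rw [← h8]
    by_cases hpm : p = m <;> simp [hpm, hconjc]
  have hud : u * diagonal c * uᴴ = diagonal c := by
    ext m p
    rw [Matrix.mul_apply]
    simp only [Matrix.mul_diagonal, conjTranspose_apply, Matrix.diagonal_apply]
    calc ∑ j, u m j * c j * conj (u p j)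
        = ∑ j, c j * (u m j * conj (u p j)) := Finset.sum_congr rfl fun j _ => by ring
      _ = if m = p then c m else 0 := E1 m p
  have hdd : diagonal c * diagonal c = 1 := by
    rw [diagonal_mul_diagonal]
    have : (fun i => c i * c i) = fun _ : Fin n => (1:ℂ) := funext hcc
    rw [this, diagonal_one]
  have hright : u * (diagonal c * uᴴ * diagonal c) = 1 := by
    simp only [← mul_assoc]
    rw [hud, hdd]
  have hleft : (diagonal c * uᴴ * diagonal c) * u = 1 := mul_eq_one_comm.mp hright
  have goal1 : uᴴ * diagonal c * u = diagonal c := by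
    have h := congrArg (fun M => diagonal c * M) hleft
    simp only [← mul_assoc] at h
    rw [hdd, one_mul, mul_one] at h
    exact h
  exact ⟨u, goal1, hD_eq⟩
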